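/- (Generalised Vaughan identity.) Let r ≥ 1 be an integer, let X ≥ 1 be real, and set M(s) = Σ_{n≤X} μ(n) n^{−s}. Then for every complex s with Re(s) > 1 one has ζ'(s)/ζ(s) = Σ_{j=1}^{r} (−1)^{j−1} C(r,j) ζ(s)^{j−1} ζ'(s) M(s)^{j} + (1 − ζ(s)M(s))^{r} · ζ'(s)/ζ(s), where C(r,j) denotes the binomial coefficient. -/

import Mathlib

open scoped BigOperators ArithmeticFunction

/-- The Dirichlet polynomial `M(s) = Σ_{n ≤ X} μ(n) n^{-s}`. -/
noncomputable def moebiusPoly (X : ℝ) (s : ℂ) : ℂ :=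
  ∑ n ∈ Finset.Icc 1 ⌊X⌋₊, (ArithmeticFunction.moebius n : ℂ) * (n : ℂ) ^ (-s)

lemma binom_aux (r : ℕ) (hr : 1 ≤ r) (x : ℂ) :
    ∑ j ∈ Finset.Icc 1 r, (-1 : ℂ) ^ (j - 1) * (r.choose j : ℂ) * x ^ j
      = 1 - (1 - x) ^ r := by
  have hexp : (1 - x) ^ r = ∑ k ∈ Finset.range (r + 1),
      (-x) ^ k * (1 : ℂ) ^ (r - k) * (r.choose k : ℂ) := by
    rw [show (1 - x) = (-x) + 1 by ring, add_pow]
  rw [hexp, Finset.sum_range_succ']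
  simp only [pow_zero, one_mul, one_pow, mul_one, Nat.choose_zero_right, Nat.cast_one]
  rw [← Finset.Ico_add_one_right_eq_Icc, Finset.sum_Ico_eq_sum_range]
  have : r + 1 - 1 = r := by omega
  rw [this]
  rw [show (1 : ℂ) - (∑ i ∈ Finset.range r, (-x) ^ (i + 1) * (r.choose (i + 1) : ℂ) + 1)
      = ∑ i ∈ Finset.range r, -((-x) ^ (i + 1) * (r.choose (i + 1) : ℂ)) by
    rw [Finset.sum_neg_distrib]; ring]
  refine Finset.sum_congr rfl fun i _ => ?_
  rw [show 1 + i - 1 = i by omega, show 1 + i = i + 1 by omega, neg_pow x (i + 1),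
    pow_succ (-1 : ℂ) i]
  ring

/-- Heath-Brown's generalised Vaughan identity:
for `Re(s) > 1`,
`ζ'(s)/ζ(s) = Σ_{j=1}^{r} (−1)^{j−1} C(r,j) ζ(s)^{j−1} ζ'(s) M(s)^{j}
  + (1 − ζ(s)M(s))^{r} ζ'(s)/ζ(s)`. -/
theorem generalized_vaughan_identity (r : ℕ) (hr : 1 ≤ r) (X : ℝ) (hX : 1 ≤ X)
    (s : ℂ) (hs : 1 < s.re) :
    deriv riemannZeta s / riemannZeta s =
      (∑ j ∈ Finset.Icc 1 r, (-1 : ℂ) ^ (j - 1) * (r.choose j : ℂ) *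
        riemannZeta s ^ (j - 1) * deriv riemannZeta s * (moebiusPoly X s) ^ j) +
      (1 - riemannZeta s * moebiusPoly X s) ^ r *
        (deriv riemannZeta s / riemannZeta s) := by
  have hZ : riemannZeta s ≠ 0 := riemannZeta_ne_zero_of_one_lt_re hs
  set Z := riemannZeta s
  set Z' := deriv riemannZeta s
  set M := moebiusPoly X s
  have key : (∑ j ∈ Finset.Icc 1 r, (-1 : ℂ) ^ (j - 1) * (r.choose j : ℂ) *
      Z ^ (j - 1) * Z' * M ^ j) * Z = (1 - (1 - Z * M) ^ r) * Z' := by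
    rw [Finset.sum_mul]
    have h1 : ∀ j ∈ Finset.Icc 1 r,
        (-1 : ℂ) ^ (j - 1) * (r.choose j : ℂ) * Z ^ (j - 1) * Z' * M ^ j * Z
          = ((-1 : ℂ) ^ (j - 1) * (r.choose j : ℂ) * (Z * M) ^ j) * Z' := by
      intro j hj
      obtain ⟨k, rfl⟩ : ∃ k, j = k + 1 := ⟨j - 1, by
        have := (Finset.mem_Icc.mp hj).1; omega⟩
      simp only [Nat.add_sub_cancel, mul_pow, pow_succ]
      ring
    rw [Finset.sum_congr rfl h1, ← Finset.sum_mul, binom_aux r hr (Z * M)]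
  field_simp
  rw [Finset.sum_congr rfl (fun j _ => show (-1 : ℂ) ^ (j - 1) * (r.choose j : ℂ) * Z ^ (j - 1) * Z' * M ^ j = Z' * (-1) ^ (j - 1) * (r.choose j : ℂ) * Z ^ (j - 1) * M ^ j by ring)] at key
  linear_combination -key
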